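/- (Corollary 4.3, sufficiency.) Let n ≥ 1, 1 ≤ p < ∞, 0 ≤ λ ≤ 1, let w : ℝⁿ → [0,∞) be a measurable weight, x₀ ∈ ℝⁿ and r₀ > 0. If sup over all x with |x − x₀| < 2r₀ and all 0 < r ≤ r₀ of w(B(x,r)) / r^{nλ} is finite, then ‖χ_{B(x₀,r₀)}‖_{p,λ;w} < ∞, i.e. χ_{B(x₀,r₀)} belongs to L^{p,λ}(ℝⁿ,w). -/

import Mathlib

open MeasureTheory

/-- The weighted Morrey norm on `ℝⁿ`: supremum over all balls `B(x,r)` of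
`( |B(x,r)|^{-λ} ∫_{B(x,r)} |f|^p w )^{1/p}`, with values in `[0,∞]`. -/
noncomputable def morreyNorm {n : ℕ} (p lam : ℝ)
    (w f : EuclideanSpace ℝ (Fin n) → ℝ) : ENNReal :=
  ⨆ (x : EuclideanSpace ℝ (Fin n)) (r : ℝ) (_ : 0 < r),
    ((volume (Metric.ball x r)) ^ (-lam) *
      ∫⁻ y in Metric.ball x r, ENNReal.ofReal (|f y| ^ p * w y)) ^ (1 / p)

/-- Corollary 4.3 (sufficiency): if
`sup_{|x-x₀|<2r₀, 0<r≤r₀} w(B(x,r)) / r^{nλ} < ∞` then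
`χ_{B(x₀,r₀)} ∈ L^{p,λ}(ℝⁿ,w)`. -/
theorem stmt7 (n : ℕ) (hn : 1 ≤ n) (p lam : ℝ) (hp : 1 ≤ p)
    (hlam0 : 0 ≤ lam) (hlam1 : lam ≤ 1)
    (w : EuclideanSpace ℝ (Fin n) → ℝ) (hw : Measurable w) (hw0 : ∀ x, 0 ≤ w x)
    (x₀ : EuclideanSpace ℝ (Fin n)) (r₀ : ℝ) (hr₀ : 0 < r₀)
    (hsup : (⨆ (x : EuclideanSpace ℝ (Fin n)) (_ : dist x x₀ < 2 * r₀)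
        (r : ℝ) (_ : 0 < r) (_ : r ≤ r₀),
          (∫⁻ y in Metric.ball x r, ENNReal.ofReal (w y)) /
            ENNReal.ofReal (r ^ ((n : ℝ) * lam))) < ⊤) :
    morreyNorm p lam w ((Metric.ball x₀ r₀).indicator 1) < ⊤ := by
  classical
  haveI : Nontrivial (EuclideanSpace ℝ (Fin n)) := by
    apply Module.nontrivial_of_finrank_pos (R := ℝ)
    rw [finrank_euclideanSpace_fin]; omega
  have hfr : Module.finrank ℝ (EuclideanSpace ℝ (Fin n)) = n := finrank_euclideanSpace_fin
  set V : ENNReal := volume (Metric.ball (0 : EuclideanSpace ℝ (Fin n)) 1) with hV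
  have hVpos : 0 < V := Metric.measure_ball_pos _ _ one_pos
  have hVtop : V ≠ ⊤ := (measure_ball_lt_top).ne
  set M : ENNReal := ⨆ (x : EuclideanSpace ℝ (Fin n)) (_ : dist x x₀ < 2 * r₀)
        (r : ℝ) (_ : 0 < r) (_ : r ≤ r₀),
          (∫⁻ y in Metric.ball x r, ENNReal.ofReal (w y)) /
            ENNReal.ofReal (r ^ ((n : ℝ) * lam)) with hM
  have hMtop : M ≠ ⊤ := hsup.ne
  have hMle : ∀ x : EuclideanSpace ℝ (Fin n), dist x x₀ < 2 * r₀ → ∀ r : ℝ, 0 < r → r ≤ r₀ →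
      (∫⁻ y in Metric.ball x r, ENNReal.ofReal (w y)) ≤
        M * ENNReal.ofReal (r ^ ((n : ℝ) * lam)) := by
    intro x hx r hr hrr
    have h1 : (∫⁻ y in Metric.ball x r, ENNReal.ofReal (w y)) /
        ENNReal.ofReal (r ^ ((n : ℝ) * lam)) ≤ M := by
      refine le_trans ?_ (le_iSup₂ (f := fun x (_ : dist x x₀ < 2 * r₀) => ⨆ (r : ℝ)
        (_ : 0 < r) (_ : r ≤ r₀), (∫⁻ y in Metric.ball x r, ENNReal.ofReal (w y)) /
            ENNReal.ofReal (r ^ ((n : ℝ) * lam))) x hx)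
      exact le_iSup₂_of_le r hr (le_iSup_of_le hrr le_rfl)
    have hb0 : ENNReal.ofReal (r ^ ((n : ℝ) * lam)) ≠ 0 :=
      (ENNReal.ofReal_pos.mpr (Real.rpow_pos_of_pos hr _)).ne'
    rw [ENNReal.div_le_iff hb0 ENNReal.ofReal_ne_top] at h1
    exact h1
  have hind : ∀ y : EuclideanSpace ℝ (Fin n), ENNReal.ofReal
      (|(Metric.ball x₀ r₀).indicator (1 : EuclideanSpace ℝ (Fin n) → ℝ) y| ^ p * w y) =
      (Metric.ball x₀ r₀).indicator (fun y => ENNReal.ofReal (w y)) y := by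
    intro y
    by_cases hy : y ∈ Metric.ball x₀ r₀
    · simp [Set.indicator_of_mem hy, Real.one_rpow]
    · simp [Set.indicator_of_notMem hy, Real.zero_rpow (by linarith : p ≠ 0)]
  set C : ENNReal := V ^ (-lam) * M with hC
  have hVl : V ^ (-lam) ≠ ⊤ := by
    rw [ENNReal.rpow_neg]
    simpa [ENNReal.inv_ne_top] using (ENNReal.rpow_pos hVpos hVtop).ne'
  have hCtop : C ≠ ⊤ := ENNReal.mul_ne_top hVl hMtop
  have hsplit : ∀ s : ℝ, 0 < s →
      (ENNReal.ofReal (s ^ n) * V) ^ (-lam) =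
        (ENNReal.ofReal (s ^ ((n : ℝ) * lam)))⁻¹ * V ^ (-lam) := by
    intro s hs
    rw [ENNReal.mul_rpow_of_ne_top ENNReal.ofReal_ne_top hVtop]
    congr 1
    rw [ENNReal.ofReal_rpow_of_pos (pow_pos hs n)]
    have h2 : ((s ^ n : ℝ)) ^ (-lam) = (s ^ ((n : ℝ) * lam))⁻¹ := by
      rw [Real.rpow_neg (by positivity), ← Real.rpow_natCast s n,
        ← Real.rpow_mul hs.le]
    rw [h2, ENNReal.ofReal_inv_of_pos (Real.rpow_pos_of_pos hs _)]
  have key : ∀ (x : EuclideanSpace ℝ (Fin n)) (r : ℝ), 0 < r →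
      (volume (Metric.ball x r)) ^ (-lam) *
        (∫⁻ y in Metric.ball x r, ENNReal.ofReal
          (|(Metric.ball x₀ r₀).indicator (1 : EuclideanSpace ℝ (Fin n) → ℝ) y| ^ p * w y)) ≤
        C := by
    intro x r hr
    have hvol : volume (Metric.ball x r) = ENNReal.ofReal (r ^ n) * V := by
      rw [Measure.addHaar_ball _ _ hr.le, hfr]
    have hIeq : (∫⁻ y in Metric.ball x r, ENNReal.ofReal
        (|(Metric.ball x₀ r₀).indicator (1 : EuclideanSpace ℝ (Fin n) → ℝ) y| ^ p * w y)) =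
        ∫⁻ y in Metric.ball x r,
          (Metric.ball x₀ r₀).indicator (fun y => ENNReal.ofReal (w y)) y :=
      lintegral_congr fun y => hind y
    rw [hIeq]
    by_cases hcap : (Metric.ball x r ∩ Metric.ball x₀ r₀).Nonempty
    · obtain ⟨z, hz1, hz2⟩ := hcap
      rcases le_or_gt r r₀ with hrle | hrgt
      · -- small radius case
        have hx2 : dist x x₀ < 2 * r₀ := by
          have := dist_triangle x z x₀
          rw [Metric.mem_ball, dist_comm] at hz1
          rw [Metric.mem_ball] at hz2
          linarith
        have hIle : (∫⁻ y in Metric.ball x r,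
            (Metric.ball x₀ r₀).indicator (fun y => ENNReal.ofReal (w y)) y) ≤
            M * ENNReal.ofReal (r ^ ((n : ℝ) * lam)) :=
          le_trans (lintegral_mono fun y => Set.indicator_le_self _ _ y) (hMle x hx2 r hr hrle)
        calc (volume (Metric.ball x r)) ^ (-lam) *
            (∫⁻ y in Metric.ball x r,
              (Metric.ball x₀ r₀).indicator (fun y => ENNReal.ofReal (w y)) y) ≤
            (ENNReal.ofReal (r ^ n) * V) ^ (-lam) *
              (M * ENNReal.ofReal (r ^ ((n : ℝ) * lam))) := by
              rw [hvol]; exact mul_le_mul_right hIle _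
          _ = C := by
              rw [hsplit r hr, hC]
              have h1 : ENNReal.ofReal (r ^ ((n : ℝ) * lam)) ≠ 0 :=
                (ENNReal.ofReal_pos.mpr (Real.rpow_pos_of_pos hr _)).ne'
              calc (ENNReal.ofReal (r ^ ((n : ℝ) * lam)))⁻¹ * V ^ (-lam) *
                    (M * ENNReal.ofReal (r ^ ((n : ℝ) * lam))) =
                  ((ENNReal.ofReal (r ^ ((n : ℝ) * lam)))⁻¹ *
                    ENNReal.ofReal (r ^ ((n : ℝ) * lam))) * (V ^ (-lam) * M) := by ring
                _ = V ^ (-lam) * M := by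
                    rw [ENNReal.inv_mul_cancel h1 ENNReal.ofReal_ne_top, one_mul]
      · -- large radius case
        have hx2 : dist x₀ x₀ < 2 * r₀ := by
          rw [dist_self]; linarith
        have hIle : (∫⁻ y in Metric.ball x r,
            (Metric.ball x₀ r₀).indicator (fun y => ENNReal.ofReal (w y)) y) ≤
            M * ENNReal.ofReal (r₀ ^ ((n : ℝ) * lam)) := by
          refine le_trans ?_ (hMle x₀ hx2 r₀ hr₀ le_rfl)
          calc (∫⁻ y in Metric.ball x r,
              (Metric.ball x₀ r₀).indicator (fun y => ENNReal.ofReal (w y)) y) ≤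
              ∫⁻ y, (Metric.ball x₀ r₀).indicator (fun y => ENNReal.ofReal (w y)) y :=
                setLIntegral_le_lintegral _ _
            _ = ∫⁻ y in Metric.ball x₀ r₀, ENNReal.ofReal (w y) :=
                lintegral_indicator measurableSet_ball _
        have hvle : (volume (Metric.ball x r)) ^ (-lam) ≤
            (ENNReal.ofReal (r₀ ^ n) * V) ^ (-lam) := by
          rw [ENNReal.rpow_neg, ENNReal.rpow_neg]
          refine ENNReal.inv_le_inv.mpr (ENNReal.rpow_le_rpow ?_ hlam0)
          have h2 : ENNReal.ofReal (r₀ ^ n) * V = volume (Metric.ball x r₀) := by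
            rw [Measure.addHaar_ball volume x hr₀.le, hfr]
          rw [h2]
          exact measure_mono (Metric.ball_subset_ball hrgt.le)
        calc (volume (Metric.ball x r)) ^ (-lam) *
            (∫⁻ y in Metric.ball x r,
              (Metric.ball x₀ r₀).indicator (fun y => ENNReal.ofReal (w y)) y) ≤
            (ENNReal.ofReal (r₀ ^ n) * V) ^ (-lam) *
              (M * ENNReal.ofReal (r₀ ^ ((n : ℝ) * lam))) :=
              mul_le_mul' hvle hIle
          _ = C := by
              rw [hsplit r₀ hr₀, hC]
              have h1 : ENNReal.ofReal (r₀ ^ ((n : ℝ) * lam)) ≠ 0 :=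
                (ENNReal.ofReal_pos.mpr (Real.rpow_pos_of_pos hr₀ _)).ne'
              calc (ENNReal.ofReal (r₀ ^ ((n : ℝ) * lam)))⁻¹ * V ^ (-lam) *
                    (M * ENNReal.ofReal (r₀ ^ ((n : ℝ) * lam))) =
                  ((ENNReal.ofReal (r₀ ^ ((n : ℝ) * lam)))⁻¹ *
                    ENNReal.ofReal (r₀ ^ ((n : ℝ) * lam))) * (V ^ (-lam) * M) := by ring
                _ = V ^ (-lam) * M := by
                    rw [ENNReal.inv_mul_cancel h1 ENNReal.ofReal_ne_top, one_mul]
    · -- empty intersection: the integral vanishes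
      have hdisj : Metric.ball x r ∩ Metric.ball x₀ r₀ = ∅ :=
        Set.not_nonempty_iff_eq_empty.mp hcap
      have hI0 : (∫⁻ y in Metric.ball x r,
          (Metric.ball x₀ r₀).indicator (fun y => ENNReal.ofReal (w y)) y) = 0 := by
        have h0 := setLIntegral_congr_fun (μ := volume) measurableSet_ball
          (f := fun y => (Metric.ball x₀ r₀).indicator (fun y => ENNReal.ofReal (w y)) y)
          (g := fun _ => 0) (fun y hy => by
            have hny : y ∉ Metric.ball x₀ r₀ := fun h =>
              Set.eq_empty_iff_forall_notMem.mp hdisj y ⟨hy, h⟩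
            simp [Set.indicator_of_notMem hny])
        simpa using h0
      rw [hI0, mul_zero]
      exact zero_le
  refine lt_of_le_of_lt (iSup_le fun x => iSup_le fun r => iSup_le fun hr =>
    ENNReal.rpow_le_rpow (key x r hr) (by positivity)) ?_
  exact ENNReal.rpow_lt_top_of_nonneg (by positivity) hCtop
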